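/- Let p be a real polynomial in the six variables x₁₁, x₂₂, x₃₃, x₁₂, x₁₃, x₂₃ of total degree at most 2 such that p vanishes at (A 1 1, A 2 2, A 3 3, A 1 2, A 1 3, A 2 3) for every real symmetric 3×3 matrix A having a multiple eigenvalue. Then p = 0. (There is no nonzero polynomial of total degree less than three vanishing on the discriminant surface M; M is essentially non-quadratic.) -/

import Mathlib

set_option maxHeartbeats 4000000

open Matrix

noncomputable def mExp (f : Fin 6 → ℕ) : Fin 6 →₀ ℕ := Finsupp.equivFunOnFinite.symm f

@[simp] lemma mExp_inj {f g : Fin 6 → ℕ} : mExp f = mExp g ↔ f = g :=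
  EmbeddingLike.apply_eq_iff_eq _

lemma sum_mExp (f : Fin 6 → ℕ) :
    (mExp f).sum (fun _ e => e) = f 0 + f 1 + f 2 + f 3 + f 4 + f 5 := by
  rw [Finsupp.sum_fintype _ _ (fun _ => rfl), Fin.sum_univ_six]; rfl

lemma prod_mExp (f : Fin 6 → ℕ) (x : Fin 6 → ℝ) :
    (mExp f).prod (fun i e => x i ^ e) =
      x 0 ^ f 0 * x 1 ^ f 1 * x 2 ^ f 2 * x 3 ^ f 3 * x 4 ^ f 4 * x 5 ^ f 5 := by
  rw [Finsupp.prod_fintype _ _ (fun _ => pow_zero _), Fin.prod_univ_six]; rfl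

lemma vval0 {α : Type*} (x0 x1 x2 x3 x4 x5 : α) : ![x0,x1,x2,x3,x4,x5] 0 = x0 := rfl
lemma vval1 {α : Type*} (x0 x1 x2 x3 x4 x5 : α) : ![x0,x1,x2,x3,x4,x5] 1 = x1 := rfl
lemma vval2 {α : Type*} (x0 x1 x2 x3 x4 x5 : α) : ![x0,x1,x2,x3,x4,x5] 2 = x2 := rfl
lemma vval3 {α : Type*} (x0 x1 x2 x3 x4 x5 : α) : ![x0,x1,x2,x3,x4,x5] 3 = x3 := rfl
lemma vval4 {α : Type*} (x0 x1 x2 x3 x4 x5 : α) : ![x0,x1,x2,x3,x4,x5] 4 = x4 := rfl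
lemma vval5 {α : Type*} (x0 x1 x2 x3 x4 x5 : α) : ![x0,x1,x2,x3,x4,x5] 5 = x5 := rfl

/-- No nonzero polynomial of total degree at most two in the six entry
coordinates vanishes on the discriminant surface: M is essentially
non-quadratic. -/
theorem no_quadratic_vanishing_on_discSurface
    (p : MvPolynomial (Fin 6) ℝ) (hdeg : p.totalDegree ≤ 2)
    (hvan : ∀ A : Matrix (Fin 3) (Fin 3) ℝ, A.IsSymm →
      (∃ c : ℝ, (Polynomial.X - Polynomial.C c) ^ 2 ∣ A.charpoly) →
      MvPolynomial.eval
        ![A 0 0, A 1 1, A 2 2, A 0 1, A 0 2, A 1 2] p = 0) :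
    p = 0 := by
  have key : ∀ a b u v w : ℝ,
      MvPolynomial.eval ![a+b*(u*u), a+b*(v*v), a+b*(w*w), b*(u*v), b*(u*w), b*(v*w)] p = 0 := by
    intro a b u v w
    set A : Matrix (Fin 3) (Fin 3) ℝ :=
      !![a+b*(u*u), b*(u*v), b*(u*w); b*(u*v), a+b*(v*v), b*(v*w); b*(u*w), b*(v*w), a+b*(w*w)] with hA
    have hs : A.IsSymm := by
      ext i j; fin_cases i <;> fin_cases j <;> simp [hA, Matrix.transpose_apply] <;> ring
    have hchar : A.charpoly = (Polynomial.X - Polynomial.C a)^2 *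
        (Polynomial.X - Polynomial.C a
          - Polynomial.C b * (Polynomial.C u^2 + Polynomial.C v^2 + Polynomial.C w^2)) := by
      rw [Matrix.charpoly, Matrix.det_fin_three]
      simp [hA, charmatrix_apply_eq, charmatrix_apply_ne, Matrix.of_apply]
      ring
    have h := hvan A hs ⟨a, ⟨_, hchar⟩⟩
    simpa [hA] using h
  have hcl : ∀ m : Fin 6 →₀ ℕ, (m.sum fun _ e => e) ≤ 2 → ∃ k0 k1 k2 k3 k4 k5 : ℕ,
      m = mExp ![k0,k1,k2,k3,k4,k5] ∧ k0+k1+k2+k3+k4+k5 ≤ 2 := by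
    intro m h
    refine ⟨m 0, m 1, m 2, m 3, m 4, m 5,
      by apply Finsupp.ext; intro j; fin_cases j <;> rfl, ?_⟩
    rwa [Finsupp.sum_fintype _ _ (fun _ => rfl), Fin.sum_univ_six] at h
  have hp : p = MvPolynomial.monomial (mExp ![0,0,0,0,0,0]) (MvPolynomial.coeff (mExp ![0,0,0,0,0,0]) p) + MvPolynomial.monomial (mExp ![1,0,0,0,0,0]) (MvPolynomial.coeff (mExp ![1,0,0,0,0,0]) p) + MvPolynomial.monomial (mExp ![0,1,0,0,0,0]) (MvPolynomial.coeff (mExp ![0,1,0,0,0,0]) p) + MvPolynomial.monomial (mExp ![0,0,1,0,0,0]) (MvPolynomial.coeff (mExp ![0,0,1,0,0,0]) p) + MvPolynomial.monomial (mExp ![0,0,0,1,0,0]) (MvPolynomial.coeff (mExp ![0,0,0,1,0,0]) p) + MvPolynomial.monomial (mExp ![0,0,0,0,1,0]) (MvPolynomial.coeff (mExp ![0,0,0,0,1,0]) p) + MvPolynomial.monomial (mExp ![0,0,0,0,0,1]) (MvPolynomial.coeff (mExp ![0,0,0,0,0,1]) p) + MvPolynomial.monomial (mExp ![2,0,0,0,0,0])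 (MvPolynomial.coeff (mExp ![2,0,0,0,0,0]) p) + MvPolynomial.monomial (mExp ![1,1,0,0,0,0]) (MvPolynomial.coeff (mExp ![1,1,0,0,0,0]) p) + MvPolynomial.monomial (mExp ![1,0,1,0,0,0]) (MvPolynomial.coeff (mExp ![1,0,1,0,0,0]) p) + MvPolynomial.monomial (mExp ![1,0,0,1,0,0]) (MvPolynomial.coeff (mExp ![1,0,0,1,0,0]) p) + MvPolynomial.monomial (mExp ![1,0,0,0,1,0]) (MvPolynomial.coeff (mExp ![1,0,0,0,1,0]) p) + MvPolynomial.monomial (mExp ![1,0,0,0,0,1]) (MvPolynomial.coeff (mExp ![1,0,0,0,0,1]) p) + MvPolynomial.monomial (mExp ![0,2,0,0,0,0]) (MvPolynomial.coeff (mExp ![0,2,0,0,0,0]) p) + MvPolynomial.monomial (mExp ![0,1,1,0,0,0]) (MvPolynomial.coeff (mExp ![0,1,1,0,0,0]) p) + MvPolynomial.monomial (mExp ![0,1,0,1,0,0]) (MvPolynomial.coeff (mExp ![0,1,0,1,0,0]) p) + MvPolynomial.monomial (mExp ![0,1,0,0,1,0]) (MvPolynomial.coeff (mExp ![0,1,0,0,1,0])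 p) + MvPolynomial.monomial (mExp ![0,1,0,0,0,1]) (MvPolynomial.coeff (mExp ![0,1,0,0,0,1]) p) + MvPolynomial.monomial (mExp ![0,0,2,0,0,0]) (MvPolynomial.coeff (mExp ![0,0,2,0,0,0]) p) + MvPolynomial.monomial (mExp ![0,0,1,1,0,0]) (MvPolynomial.coeff (mExp ![0,0,1,1,0,0]) p) + MvPolynomial.monomial (mExp ![0,0,1,0,1,0]) (MvPolynomial.coeff (mExp ![0,0,1,0,1,0]) p) + MvPolynomial.monomial (mExp ![0,0,1,0,0,1]) (MvPolynomial.coeff (mExp ![0,0,1,0,0,1]) p) + MvPolynomial.monomial (mExp ![0,0,0,2,0,0]) (MvPolynomial.coeff (mExp ![0,0,0,2,0,0]) p) + MvPolynomial.monomial (mExp ![0,0,0,1,1,0]) (MvPolynomial.coeff (mExp ![0,0,0,1,1,0]) p) + MvPolynomial.monomial (mExp ![0,0,0,1,0,1]) (MvPolynomial.coeff (mExp ![0,0,0,1,0,1]) p) + MvPolynomial.monomial (mExp ![0,0,0,0,2,0]) (MvPolynomial.coeff (mExp ![0,0,0,0,2,0]) p) + MvPolynomial.monomial (mExp ![0,0,0,0,1,1])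 (MvPolynomial.coeff (mExp ![0,0,0,0,1,1]) p) + MvPolynomial.monomial (mExp ![0,0,0,0,0,2]) (MvPolynomial.coeff (mExp ![0,0,0,0,0,2]) p) := by
    apply MvPolynomial.ext
    intro m
    rcases le_or_gt (m.sum fun _ e => e) 2 with hle | hgt
    · obtain ⟨k0,k1,k2,k3,k4,k5,hm,hk⟩ := hcl m hle
      subst hm
      have b0 : k0 ≤ 2 := by omega
      have b1 : k1 ≤ 2 := by omega
      have b2 : k2 ≤ 2 := by omega
      have b3 : k3 ≤ 2 := by omega
      have b4 : k4 ≤ 2 := by omega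
      have b5 : k5 ≤ 2 := by omega
      interval_cases k0 <;> interval_cases k1 <;> interval_cases k2 <;>
        interval_cases k3 <;> interval_cases k4 <;> interval_cases k5 <;>
        first
        | omega
        | norm_num [MvPolynomial.coeff_add, MvPolynomial.coeff_monomial, mExp_inj,
            Fin.cons_inj]
    · have hz : MvPolynomial.coeff m p = 0 :=
        MvPolynomial.coeff_eq_zero_of_totalDegree_lt (lt_of_le_of_lt hdeg hgt)
      have hne : ∀ f : Fin 6 → ℕ, f 0 + f 1 + f 2 + f 3 + f 4 + f 5 ≤ 2 → ¬ (mExp f = m) := by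
        intro f hf e
        rw [← e, sum_mExp] at hgt
        omega
      rw [hz]
      simp only [MvPolynomial.coeff_add, MvPolynomial.coeff_monomial]
      rw [if_neg (hne ![0,0,0,0,0,0] (by norm_num [vval0, vval1, vval2, vval3, vval4, vval5])), if_neg (hne ![1,0,0,0,0,0] (by norm_num [vval0, vval1, vval2, vval3, vval4, vval5])), if_neg (hne ![0,1,0,0,0,0] (by norm_num [vval0, vval1, vval2, vval3, vval4, vval5])), if_neg (hne ![0,0,1,0,0,0] (by norm_num [vval0, vval1, vval2, vval3, vval4, vval5])), if_neg (hne ![0,0,0,1,0,0] (by norm_num [vval0, vval1, vval2, vval3, vval4, vval5])), if_neg (hne ![0,0,0,0,1,0] (by norm_num [vval0, vval1, vval2, vval3, vval4, vval5])), if_neg (hne ![0,0,0,0,0,1] (by norm_num [vval0, vval1, vval2, vval3, vval4, vval5])), if_neg (hne ![2,0,0,0,0,0] (by norm_num [vval0, vval1, vval2, vval3, vval4, vval5])), if_neg (hne ![1,1,0,0,0,0] (by norm_num [vval0, vval1, vval2, vval3, vval4, vval5])), if_neg (hne ![1,0,1,0,0,0] (by norm_num [vval0, vval1, vval2, vval3,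 vval4, vval5])), if_neg (hne ![1,0,0,1,0,0] (by norm_num [vval0, vval1, vval2, vval3, vval4, vval5])), if_neg (hne ![1,0,0,0,1,0] (by norm_num [vval0, vval1, vval2, vval3, vval4, vval5])), if_neg (hne ![1,0,0,0,0,1] (by norm_num [vval0, vval1, vval2, vval3, vval4, vval5])), if_neg (hne ![0,2,0,0,0,0] (by norm_num [vval0, vval1, vval2, vval3, vval4, vval5])), if_neg (hne ![0,1,1,0,0,0] (by norm_num [vval0, vval1, vval2, vval3, vval4, vval5])), if_neg (hne ![0,1,0,1,0,0] (by norm_num [vval0, vval1, vval2, vval3, vval4, vval5])), if_neg (hne ![0,1,0,0,1,0] (by norm_num [vval0, vval1, vval2, vval3, vval4, vval5])), if_neg (hne ![0,1,0,0,0,1] (by norm_num [vval0, vval1, vval2, vval3, vval4, vval5])), if_neg (hne ![0,0,2,0,0,0] (by norm_num [vval0, vval1, vval2, vval3, vval4, vval5])), if_neg (hne ![0,0,1,1,0,0] (by norm_num [vval0, vval1, vval2, vval3, vval4, vval5])), if_neg (hne ![0,0,1,0,1,0] (by norm_num [vval0, vval1, vval2, vval3, vval4, vval5])), if_neg (hne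 ![0,0,1,0,0,1] (by norm_num [vval0, vval1, vval2, vval3, vval4, vval5])), if_neg (hne ![0,0,0,2,0,0] (by norm_num [vval0, vval1, vval2, vval3, vval4, vval5])), if_neg (hne ![0,0,0,1,1,0] (by norm_num [vval0, vval1, vval2, vval3, vval4, vval5])), if_neg (hne ![0,0,0,1,0,1] (by norm_num [vval0, vval1, vval2, vval3, vval4, vval5])), if_neg (hne ![0,0,0,0,2,0] (by norm_num [vval0, vval1, vval2, vval3, vval4, vval5])), if_neg (hne ![0,0,0,0,1,1] (by norm_num [vval0, vval1, vval2, vval3, vval4, vval5])), if_neg (hne ![0,0,0,0,0,2] (by norm_num [vval0, vval1, vval2, vval3, vval4, vval5]))]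
      norm_num
  have hEval : ∀ a b u v w : ℝ, MvPolynomial.coeff (mExp ![0,0,0,0,0,0]) p * (1) + MvPolynomial.coeff (mExp ![1,0,0,0,0,0]) p * ((a+b*(u*u))) + MvPolynomial.coeff (mExp ![0,1,0,0,0,0]) p * ((a+b*(v*v))) + MvPolynomial.coeff (mExp ![0,0,1,0,0,0]) p * ((a+b*(w*w))) + MvPolynomial.coeff (mExp ![0,0,0,1,0,0]) p * ((b*(u*v))) + MvPolynomial.coeff (mExp ![0,0,0,0,1,0]) p * ((b*(u*w))) + MvPolynomial.coeff (mExp ![0,0,0,0,0,1]) p * ((b*(v*w))) + MvPolynomial.coeff (mExp ![2,0,0,0,0,0]) p * ((a+b*(u*u))^2) + MvPolynomial.coeff (mExp ![1,1,0,0,0,0]) p * ((a+b*(u*u))*(a+b*(v*v))) + MvPolynomial.coeff (mExp ![1,0,1,0,0,0]) p * ((a+b*(u*u))*(a+b*(w*w))) + MvPolynomial.coeff (mExp ![1,0,0,1,0,0]) p * ((a+b*(u*u))*(b*(u*v))) + MvPolynomial.coeff (mExp ![1,0,0,0,1,0]) p * ((a+b*(u*u))*(b*(u*w))) + MvPolynomial.coeff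 (mExp ![1,0,0,0,0,1]) p * ((a+b*(u*u))*(b*(v*w))) + MvPolynomial.coeff (mExp ![0,2,0,0,0,0]) p * ((a+b*(v*v))^2) + MvPolynomial.coeff (mExp ![0,1,1,0,0,0]) p * ((a+b*(v*v))*(a+b*(w*w))) + MvPolynomial.coeff (mExp ![0,1,0,1,0,0]) p * ((a+b*(v*v))*(b*(u*v))) + MvPolynomial.coeff (mExp ![0,1,0,0,1,0]) p * ((a+b*(v*v))*(b*(u*w))) + MvPolynomial.coeff (mExp ![0,1,0,0,0,1]) p * ((a+b*(v*v))*(b*(v*w))) + MvPolynomial.coeff (mExp ![0,0,2,0,0,0]) p * ((a+b*(w*w))^2) + MvPolynomial.coeff (mExp ![0,0,1,1,0,0]) p * ((a+b*(w*w))*(b*(u*v))) + MvPolynomial.coeff (mExp ![0,0,1,0,1,0]) p * ((a+b*(w*w))*(b*(u*w))) + MvPolynomial.coeff (mExp ![0,0,1,0,0,1]) p * ((a+b*(w*w))*(b*(v*w))) + MvPolynomial.coeff (mExp ![0,0,0,2,0,0]) p * ((b*(u*v))^2) + MvPolynomial.coeff (mExp ![0,0,0,1,1,0]) p * ((b*(u*v))*(b*(u*w)))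 + MvPolynomial.coeff (mExp ![0,0,0,1,0,1]) p * ((b*(u*v))*(b*(v*w))) + MvPolynomial.coeff (mExp ![0,0,0,0,2,0]) p * ((b*(u*w))^2) + MvPolynomial.coeff (mExp ![0,0,0,0,1,1]) p * ((b*(u*w))*(b*(v*w))) + MvPolynomial.coeff (mExp ![0,0,0,0,0,2]) p * ((b*(v*w))^2) = 0 := by
    intro a b u v w
    have h := key a b u v w
    rw [hp] at h
    rw [← h]
    simp only [map_add, MvPolynomial.eval_monomial, prod_mExp,
      vval0, vval1, vval2, vval3, vval4, vval5, Matrix.cons_val_zero, Matrix.cons_val_one,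
      Matrix.head_cons]
    ring
  have h0 : MvPolynomial.coeff (mExp ![0,0,0,0,0,0]) p = 0 := by linear_combination (1 : ℝ) * hEval 0 0 0 0 0
  have h1 : MvPolynomial.coeff (mExp ![1,0,0,0,0,0]) p = 0 := by linear_combination ((-1/2) : ℝ) * hEval 0 (-1) (-1) 0 0 + ((1/2) : ℝ) * hEval 0 1 (-1) 0 0
  have h2 : MvPolynomial.coeff (mExp ![0,1,0,0,0,0]) p = 0 := by linear_combination ((-1/2) : ℝ) * hEval 0 (-1) 0 (-1) 0 + ((1/2) : ℝ) * hEval 0 1 0 (-1) 0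
  have h3 : MvPolynomial.coeff (mExp ![0,0,1,0,0,0]) p = 0 := by linear_combination ((-1/2) : ℝ) * hEval 0 (-1) 0 0 (-1) + ((1/2) : ℝ) * hEval 0 1 0 0 (-1)
  have h4 : MvPolynomial.coeff (mExp ![0,0,0,1,0,0]) p = 0 := by linear_combination ((-1/2) : ℝ) * hEval 0 (-1) 0 0 (-1) + ((1/2) : ℝ) * hEval 0 1 0 0 (-1) + ((1/2) : ℝ) * hEval (-1) 1 (-1) (-1) 0 + ((-1/2) : ℝ) * hEval 1 (-1) (-1) (-1) 0
  have h5 : MvPolynomial.coeff (mExp ![0,0,0,0,1,0]) p = 0 := by linear_combination ((-1/2) : ℝ) * hEval 0 (-1) 0 (-1) 0 + ((1/2) : ℝ) * hEval 0 1 0 (-1) 0 + ((1/2) : ℝ) * hEval (-1) 1 (-1) 0 (-1) + ((-1/2) : ℝ) * hEval 1 (-1) (-1) 0 (-1)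
  have h6 : MvPolynomial.coeff (mExp ![0,0,0,0,0,1]) p = 0 := by linear_combination ((-1/2) : ℝ) * hEval 0 (-1) (-1) 0 0 + ((1/2) : ℝ) * hEval 0 1 (-1) 0 0 + ((1/2) : ℝ) * hEval (-1) 1 0 (-1) (-1) + ((-1/2) : ℝ) * hEval 1 (-1) 0 (-1) (-1)
  have h7 : MvPolynomial.coeff (mExp ![2,0,0,0,0,0]) p = 0 := by linear_combination ((-1) : ℝ) * hEval 0 0 0 0 0 + ((1/2) : ℝ) * hEval 0 (-1) (-1) 0 0 + ((1/2) : ℝ) * hEval 0 1 (-1) 0 0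
  have h8 : MvPolynomial.coeff (mExp ![1,1,0,0,0,0]) p = 0 := by linear_combination (1 : ℝ) * hEval 0 0 0 0 0 + ((-1) : ℝ) * hEval 0 (-1) (-1) 0 0 + ((-1) : ℝ) * hEval 0 (-1) 0 (-1) 0 + (1 : ℝ) * hEval (-1) 1 0 0 (-1)
  have h9 : MvPolynomial.coeff (mExp ![1,0,1,0,0,0]) p = 0 := by linear_combination (1 : ℝ) * hEval 0 0 0 0 0 + ((-1) : ℝ) * hEval 0 (-1) (-1) 0 0 + ((-1) : ℝ) * hEval 0 (-1) 0 0 (-1) + (1 : ℝ) * hEval (-1) 1 0 (-1) 0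
  have h10 : MvPolynomial.coeff (mExp ![1,0,0,1,0,0]) p = 0 := by linear_combination (2 : ℝ) * hEval 0 0 0 0 0 + ((-7/6) : ℝ) * hEval 0 (-1) (-1) 0 0 + ((-1/6) : ℝ) * hEval 0 (-1) 0 (-1) 0 + ((-1/6) : ℝ) * hEval 0 (-1) 0 0 (-1) + ((-1/2) : ℝ) * hEval 0 1 (-1) 0 0 + ((1/6) : ℝ) * hEval 0 1 0 0 (-1) + ((-1/3) : ℝ) * hEval (-1) 1 (-1) 0 0 + ((2/3) : ℝ) * hEval (-1) 1 0 (-1) 0 + ((-1/2) : ℝ) * hEval (-1) 1 (-1) (-1) 0 + ((-1/6) : ℝ) * hEval (-1) 1 (-1) 1 0 + ((-1/3) : ℝ) * hEval 1 (-1) (-1) (-1) 0 + ((1/3) : ℝ) * hEval 0 (-1) (-1) (-1) 0 + ((1/6) : ℝ) * hEval (-2) 1 (-2) (-1) 0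
  have h11 : MvPolynomial.coeff (mExp ![1,0,0,0,1,0]) p = 0 := by linear_combination (2 : ℝ) * hEval 0 0 0 0 0 + ((-7/6) : ℝ) * hEval 0 (-1) (-1) 0 0 + ((-1/6) : ℝ) * hEval 0 (-1) 0 (-1) 0 + ((-1/6) : ℝ) * hEval 0 (-1) 0 0 (-1) + ((-1/2) : ℝ) * hEval 0 1 (-1) 0 0 + ((1/6) : ℝ) * hEval 0 1 0 (-1) 0 + ((-1/3) : ℝ) * hEval (-1) 1 (-1) 0 0 + ((2/3) : ℝ) * hEval (-1) 1 0 0 (-1) + ((-1/2) : ℝ) * hEval (-1) 1 (-1) 0 (-1) + ((-1/6) : ℝ) * hEval (-1) 1 (-1) 0 1 + ((-1/3) : ℝ) * hEval 1 (-1) (-1) 0 (-1) + ((1/3) : ℝ) * hEval 0 (-1) (-1) 0 (-1) + ((1/6) : ℝ) * hEval (-2) 1 (-2) 0 (-1)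
  have h12 : MvPolynomial.coeff (mExp ![1,0,0,0,0,1]) p = 0 := by linear_combination ((-1/2) : ℝ) * hEval 0 (-1) (-1) 0 0 + ((1/2) : ℝ) * hEval 0 1 (-1) 0 0 + ((1/2) : ℝ) * hEval (-1) 1 0 (-1) 1 + ((-1/2) : ℝ) * hEval 1 (-1) 0 (-1) (-1)
  have h13 : MvPolynomial.coeff (mExp ![0,2,0,0,0,0]) p = 0 := by linear_combination ((-1) : ℝ) * hEval 0 0 0 0 0 + ((1/2) : ℝ) * hEval 0 (-1) 0 (-1) 0 + ((1/2) : ℝ) * hEval 0 1 0 (-1) 0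
  have h14 : MvPolynomial.coeff (mExp ![0,1,1,0,0,0]) p = 0 := by linear_combination (1 : ℝ) * hEval 0 0 0 0 0 + ((-1) : ℝ) * hEval 0 (-1) 0 (-1) 0 + ((-1) : ℝ) * hEval 0 (-1) 0 0 (-1) + (1 : ℝ) * hEval (-1) 1 (-1) 0 0
  have h15 : MvPolynomial.coeff (mExp ![0,1,0,1,0,0]) p = 0 := by linear_combination ((-2) : ℝ) * hEval 0 0 0 0 0 + ((7/6) : ℝ) * hEval 0 (-1) (-1) 0 0 + ((1/6) : ℝ) * hEval 0 (-1) 0 (-1) 0 + ((2/3) : ℝ) * hEval 0 (-1) 0 0 (-1) + ((1/2) : ℝ) * hEval 0 1 (-1) 0 0 + ((1/3) : ℝ) * hEval 0 1 0 0 (-1) + ((1/3) : ℝ) * hEval (-1) 1 (-1) 0 0 + ((-2/3) : ℝ) * hEval (-1) 1 0 (-1) 0 + ((-1) : ℝ) * hEval (-1) 1 0 0 (-1) + ((1/2) : ℝ) * hEval (-1) 1 (-1) (-1) 0 + ((-1/3) : ℝ) * hEval (-1) 1 (-1) 1 0 + ((-1/6) : ℝ) * hEval 1 (-1) (-1) (-1)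 0 + ((2/3) : ℝ) * hEval 0 (-1) (-1) (-1) 0 + ((-1/6) : ℝ) * hEval (-2) 1 (-2) (-1) 0
  have h16 : MvPolynomial.coeff (mExp ![0,1,0,0,1,0]) p = 0 := by linear_combination ((-1/2) : ℝ) * hEval 0 (-1) 0 (-1) 0 + ((1/2) : ℝ) * hEval 0 1 0 (-1) 0 + ((1/2) : ℝ) * hEval (-1) 1 (-1) 0 1 + ((-1/2) : ℝ) * hEval 1 (-1) (-1) 0 (-1)
  have h17 : MvPolynomial.coeff (mExp ![0,1,0,0,0,1]) p = 0 := by linear_combination (2 : ℝ) * hEval 0 0 0 0 0 + ((-1/6) : ℝ) * hEval 0 (-1) (-1) 0 0 + ((-7/6) : ℝ) * hEval 0 (-1) 0 (-1) 0 + ((-1/6) : ℝ) * hEval 0 (-1) 0 0 (-1) + ((1/6) : ℝ) * hEval 0 1 (-1) 0 0 + ((-1/2) : ℝ) * hEval 0 1 0 (-1) 0 + ((-1/3) : ℝ) * hEval (-1) 1 0 (-1) 0 + ((2/3) : ℝ) * hEval (-1) 1 0 0 (-1) + ((-1/2) : ℝ) * hEval (-1) 1 0 (-1) (-1) + ((-1/6)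 : ℝ) * hEval (-1) 1 0 (-1) 1 + ((-1/3) : ℝ) * hEval 1 (-1) 0 (-1) (-1) + ((1/3) : ℝ) * hEval 0 (-1) 0 (-1) (-1) + ((1/6) : ℝ) * hEval (-2) 1 0 (-2) (-1)
  have h18 : MvPolynomial.coeff (mExp ![0,0,2,0,0,0]) p = 0 := by linear_combination ((-1) : ℝ) * hEval 0 0 0 0 0 + ((1/2) : ℝ) * hEval 0 (-1) 0 0 (-1) + ((1/2) : ℝ) * hEval 0 1 0 0 (-1)
  have h19 : MvPolynomial.coeff (mExp ![0,0,1,1,0,0]) p = 0 := by linear_combination ((-1/2) : ℝ) * hEval 0 (-1) 0 0 (-1) + ((1/2) : ℝ) * hEval 0 1 0 0 (-1) + ((1/2) : ℝ) * hEval (-1) 1 (-1) 1 0 + ((-1/2) : ℝ) * hEval 1 (-1) (-1) (-1) 0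
  have h20 : MvPolynomial.coeff (mExp ![0,0,1,0,1,0]) p = 0 := by linear_combination ((-2) : ℝ) * hEval 0 0 0 0 0 + ((7/6) : ℝ) * hEval 0 (-1) (-1) 0 0 + ((2/3) : ℝ) * hEval 0 (-1) 0 (-1) 0 + ((1/6) : ℝ) * hEval 0 (-1) 0 0 (-1) + ((1/2) : ℝ) * hEval 0 1 (-1) 0 0 + ((1/3) : ℝ) * hEval 0 1 0 (-1) 0 + ((1/3) : ℝ) * hEval (-1) 1 (-1) 0 0 + ((-1) : ℝ) * hEval (-1) 1 0 (-1) 0 + ((-2/3) : ℝ) * hEval (-1) 1 0 0 (-1) + ((1/2) : ℝ) * hEval (-1) 1 (-1) 0 (-1) + ((-1/3) : ℝ) * hEval (-1) 1 (-1) 0 1 + ((-1/6) : ℝ) * hEval 1 (-1) (-1) 0 (-1) + ((2/3) : ℝ) * hEval 0 (-1) (-1) 0 (-1) + ((-1/6) : ℝ) * hEval (-2) 1 (-2) 0 (-1)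
  have h21 : MvPolynomial.coeff (mExp ![0,0,1,0,0,1]) p = 0 := by linear_combination ((-2) : ℝ) * hEval 0 0 0 0 0 + ((2/3) : ℝ) * hEval 0 (-1) (-1) 0 0 + ((7/6) : ℝ) * hEval 0 (-1) 0 (-1) 0 + ((1/6) : ℝ) * hEval 0 (-1) 0 0 (-1) + ((1/3) : ℝ) * hEval 0 1 (-1) 0 0 + ((1/2) : ℝ) * hEval 0 1 0 (-1) 0 + ((-1) : ℝ) * hEval (-1) 1 (-1) 0 0 + ((1/3) : ℝ) * hEval (-1) 1 0 (-1) 0 + ((-2/3) : ℝ) * hEval (-1) 1 0 0 (-1) + ((1/2) : ℝ) * hEval (-1) 1 0 (-1) (-1) + ((-1/3) : ℝ) * hEval (-1) 1 0 (-1) 1 + ((-1/6) : ℝ) * hEval 1 (-1) 0 (-1) (-1) + ((2/3) : ℝ) * hEval 0 (-1) 0 (-1) (-1) + ((-1/6) : ℝ) * hEval (-2) 1 0 (-2) (-1)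
  have h22 : MvPolynomial.coeff (mExp ![0,0,0,2,0,0]) p = 0 := by linear_combination ((-1) : ℝ) * hEval 0 (-1) 0 0 (-1) + ((1/2) : ℝ) * hEval (-1) 1 (-1) (-1) 0 + ((1/2) : ℝ) * hEval (-1) 1 (-1) 1 0
  have h23 : MvPolynomial.coeff (mExp ![0,0,0,1,1,0]) p = 0 := by linear_combination (1 : ℝ) * hEval 0 0 0 0 0 + ((-1/2) : ℝ) * hEval 0 (-1) (-1) 0 0 + ((-1) : ℝ) * hEval 0 (-1) 0 (-1) 0 + ((-1) : ℝ) * hEval 0 (-1) 0 0 (-1) + ((-1/2) : ℝ) * hEval 0 1 (-1) 0 0 + ((1/2) : ℝ) * hEval (-1) 1 (-1) (-1) 0 + ((1/2) : ℝ) * hEval (-1) 1 (-1) 0 (-1) + ((1/2) : ℝ) * hEval (-1) 1 (-1) 0 1 + ((1/2) : ℝ) * hEval (-1) 1 (-1) 1 0 + ((1/2) : ℝ) * hEval (-1) 1 0 (-1) 1 + ((1/2) : ℝ) * hEval 1 (-1) 0 (-1) (-1) + ((-1/2) : ℝ) * hEval (-1) 1 (-1) (-1) 1 + ((-1/2) :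 ℝ) * hEval (-1) 1 (-1) 1 (-1)
  have h24 : MvPolynomial.coeff (mExp ![0,0,0,1,0,1]) p = 0 := by linear_combination ((-1) : ℝ) * hEval 0 0 0 0 0 + (1 : ℝ) * hEval 0 (-1) (-1) 0 0 + ((3/2) : ℝ) * hEval 0 (-1) 0 (-1) 0 + (1 : ℝ) * hEval 0 (-1) 0 0 (-1) + ((-1/2) : ℝ) * hEval 0 1 0 (-1) 0 + ((-1/2) : ℝ) * hEval (-1) 1 (-1) (-1) 0 + ((-1) : ℝ) * hEval (-1) 1 (-1) 0 (-1) + ((-1/2) : ℝ) * hEval (-1) 1 (-1) 0 1 + ((-1/2) : ℝ) * hEval (-1) 1 (-1) 1 0 + ((-1/2) : ℝ) * hEval (-1) 1 0 (-1) (-1) + ((-1/2) : ℝ) * hEval (-1) 1 0 (-1) 1 + ((1/2) : ℝ) * hEval 1 (-1) (-1) 0 (-1) + ((1/2) : ℝ) * hEval (-1) 1 (-1) (-1) (-1) + ((1/2) : ℝ) * hEval (-1) 1 (-1) 1 (-1)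
  have h25 : MvPolynomial.coeff (mExp ![0,0,0,0,2,0]) p = 0 := by linear_combination ((-1) : ℝ) * hEval 0 (-1) 0 (-1) 0 + ((1/2) : ℝ) * hEval (-1) 1 (-1) 0 (-1) + ((1/2) : ℝ) * hEval (-1) 1 (-1) 0 1
  have h26 : MvPolynomial.coeff (mExp ![0,0,0,0,1,1]) p = 0 := by linear_combination ((-1) : ℝ) * hEval 0 0 0 0 0 + (1 : ℝ) * hEval 0 (-1) (-1) 0 0 + (1 : ℝ) * hEval 0 (-1) 0 (-1) 0 + ((3/2) : ℝ) * hEval 0 (-1) 0 0 (-1) + ((-1/2) : ℝ) * hEval 0 1 0 0 (-1) + ((-1) : ℝ) * hEval (-1) 1 (-1) (-1) 0 + ((-1/2) : ℝ) * hEval (-1) 1 (-1) 0 (-1) + ((-1/2) : ℝ) * hEval (-1) 1 (-1) 0 1 + ((-1/2) : ℝ) * hEval (-1) 1 (-1) 1 0 + ((-1/2) : ℝ) * hEval (-1) 1 0 (-1) (-1) + ((-1/2) : ℝ) * hEval (-1) 1 0 (-1) 1 + ((1/2) : ℝ) * hEval 1 (-1) (-1) (-1) 0 + ((1/2) : ℝ)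 * hEval (-1) 1 (-1) (-1) (-1) + ((1/2) : ℝ) * hEval (-1) 1 (-1) (-1) 1
  have h27 : MvPolynomial.coeff (mExp ![0,0,0,0,0,2]) p = 0 := by linear_combination ((-1) : ℝ) * hEval 0 (-1) (-1) 0 0 + ((1/2) : ℝ) * hEval (-1) 1 0 (-1) (-1) + ((1/2) : ℝ) * hEval (-1) 1 0 (-1) 1
  rw [hp]
  rw [h0, h1, h2, h3, h4, h5, h6, h7, h8, h9, h10, h11, h12, h13, h14, h15, h16, h17, h18, h19, h20, h21, h22, h23, h24, h25, h26, h27]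
  simp
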